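/- Let G be a connected Lie group and K a compact subgroup such that there exists a continuous involution τ: G → G with τ(x) ∈ Kx⁻¹K for all x ∈ G. Then the convolution algebra L¹(G/K)^K of K-bi-invariant integrable functions is commutative (i.e., (G,K) is a Gelfand pair). -/

import Mathlib

open MeasureTheory Pointwise

/-- If there is a continuous involutive automorphism `τ` of the connected group `G`
with `τ(x) ∈ K x⁻¹ K` for all `x`, then the convolution algebra of `K`-bi-invariant
integrable functions is commutative, i.e. `(G,K)` is a Gelfand pair. -/
theorem gelfand_pair_of_involution
    {G : Type*} [Group G] [TopologicalSpace G] [IsTopologicalGroup G]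
    [MeasurableSpace G] [BorelSpace G] [LocallyCompactSpace G] [ConnectedSpace G]
    (μ : Measure G) [μ.IsHaarMeasure]
    (K : Subgroup G) (hK : IsCompact (K : Set G))
    (τ : G → G) (hτc : Continuous τ) (hτ2 : ∀ x, τ (τ x) = x)
    (hτhom : ∀ x y, τ (x * y) = τ x * τ y)
    (hτK : ∀ x : G, ∃ k₁ ∈ K, ∃ k₂ ∈ K, τ x = k₁ * x⁻¹ * k₂) :
    ∀ f g : G → ℂ, Integrable f μ → Integrable g μ →
      (∀ k₁ ∈ K, ∀ k₂ ∈ K, ∀ x, f (k₁ * x * k₂) = f x) →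
      (∀ k₁ ∈ K, ∀ k₂ ∈ K, ∀ x, g (k₁ * x * k₂) = g x) →
      (fun x => ∫ y, f y * g (y⁻¹ * x) ∂μ) =ᵐ[μ]
        fun x => ∫ y, g y * f (y⁻¹ * x) ∂μ := by
  intro f g hfi hgi hfK hgK
  -- Basic facts about τ
  have hτ1 : τ 1 = 1 := by
    have h := hτhom 1 1
    rw [one_mul] at h
    exact (left_eq_mul.mp h)
  have hτinv : ∀ y : G, τ y⁻¹ = (τ y)⁻¹ := by
    intro y
    have h := hτhom y y⁻¹
    rw [mul_inv_cancel, hτ1] at h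
    exact eq_inv_of_mul_eq_one_right h.symm
  -- τ as a multiplicative equivalence and homeomorphism
  let τm : G ≃* G :=
    { toFun := τ, invFun := τ, left_inv := hτ2, right_inv := hτ2, map_mul' := hτhom }
  let τh : G ≃ₜ G := { toEquiv := τm.toEquiv, continuous_toFun := hτc,
                       continuous_invFun := hτc }
  have τmemb : MeasurableEmbedding τ := τh.measurableEmbedding
  haveI hHaar : (μ.map τ).IsHaarMeasure := τm.isHaarMeasure_map μ hτc hτc
  -- key identity on sets with compact closure
  set c : NNReal := Measure.haarScalarFactor (μ.map τ) μ with hcdef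
  have hkey : ∀ s : Set G, IsCompact (closure s) → μ (τ ⁻¹' s) = c • μ s := by
    intro s hs
    rw [← MeasurableEmbedding.map_apply τmemb μ s]
    exact Measure.measure_isMulInvariant_eq_smul_of_isCompact_closure (μ.map τ) μ hs
  -- a compact symmetric neighborhood of 1
  obtain ⟨V, hVc, hV1⟩ := exists_compact_mem_nhds (1 : G)
  set S : Set G := V ∪ V⁻¹ with hSdef
  have hSc : IsCompact S := hVc.union hVc.inv
  have hS1 : S ∈ nhds (1 : G) := Filter.mem_of_superset hV1 Set.subset_union_left
  have hSsymm : S⁻¹ = S := by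
    ext x
    simp only [hSdef, Set.mem_inv, Set.mem_union]
    constructor
    · rintro (h | h)
      · exact Or.inr (by simpa [Set.mem_inv] using h)
      · exact Or.inl (by simpa [Set.mem_inv] using h)
    · rintro (h | h)
      · exact Or.inr (by simpa [Set.mem_inv] using h)
      · exact Or.inl (by simpa [Set.mem_inv] using h)
  have h1S : (1 : G) ∈ S := mem_of_mem_nhds hS1
  -- the scalar factor is 1
  have hc1 : c = 1 := by
    have hS0 : μ S ≠ 0 := (Measure.measure_pos_of_mem_nhds (μ := μ) hS1).ne'
    have hStop : μ S ≠ ⊤ := hSc.measure_lt_top.ne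
    have h1 : μ (τ ⁻¹' S) = c • μ S := hkey S hSc.closure
    have hpre : IsCompact (τ ⁻¹' S) := by
      have : τ ⁻¹' S = τ '' S := by
        ext x
        constructor
        · intro hx; exact ⟨τ x, hx, hτ2 x⟩
        · rintro ⟨y, hy, rfl⟩; simpa [hτ2 y] using hy
      rw [this]
      exact hSc.image hτc
    have h2 : μ (τ ⁻¹' (τ ⁻¹' S)) = c • μ (τ ⁻¹' S) := hkey _ hpre.closure
    have hpp : τ ⁻¹' (τ ⁻¹' S) = S := by
      ext x; simp [Set.mem_preimage, hτ2 x]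
    rw [hpp, h1] at h2
    -- h2 : μ S = c • (c • μ S)
    have hcc : (c : ENNReal) * c = 1 := by
      have h2' : (1 : ENNReal) * μ S = ((c : ENNReal) * c) * μ S := by
        rw [one_mul]
        calc μ S = c • (c • μ S) := h2
          _ = ((c : ENNReal) * c) * μ S := by
              simp [ENNReal.smul_def, mul_assoc]
      have := (ENNReal.mul_left_inj hS0 hStop).mp h2'.symm
      rw [this]
    have hccR : (c : ℝ) * c = 1 := by
      have : (c * c : NNReal) = 1 := by exact_mod_cast hcc
      exact_mod_cast congrArg NNReal.toReal this
    have hfactor : ((c : ℝ) - 1) * ((c : ℝ) + 1) = 0 := by linear_combination hccR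
    rcases mul_eq_zero.mp hfactor with h | h
    · have : (c : ℝ) = 1 := by linarith
      exact NNReal.coe_injective (by simpa using this)
    · exfalso
      have := c.coe_nonneg
      linarith
  -- exhaustion by compact closed sets
  set T : ℕ → Set G := fun n => closure (S ^ (n + 1)) with hTdef
  have hTcomp : ∀ n, IsCompact (T n) := by
    intro n
    have : IsCompact (S ^ (n + 1)) := by
      induction n with
      | zero => simpa using hSc
      | succ m ih => rw [pow_succ]; exact ih.mul hSc
    exact this.closure
  have hTclosed : ∀ n, IsClosed (T n) := fun n => isClosed_closure
  have hTmono : Monotone T := by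
    intro a b hab
    exact closure_mono (Set.pow_subset_pow_right h1S (Nat.add_le_add_right hab 1))
  have hTcover : (⋃ n, T n) = Set.univ := by
    apply Set.eq_univ_of_forall
    intro x
    have hx : x ∈ Subgroup.closure S := by
      have hopen : IsOpen ((Subgroup.closure S : Subgroup G) : Set G) :=
        Subgroup.isOpen_of_mem_nhds _
          (Filter.mem_of_superset hS1 Subgroup.subset_closure)
      have hclosed : IsClosed ((Subgroup.closure S : Subgroup G) : Set G) :=
        Subgroup.isClosed_of_isOpen _ hopen
      have huniv : ((Subgroup.closure S : Subgroup G) : Set G) = Set.univ :=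
        IsClopen.eq_univ ⟨hclosed, hopen⟩ ⟨1, Subgroup.one_mem _⟩
      have : x ∈ ((Subgroup.closure S : Subgroup G) : Set G) := by
        rw [huniv]; trivial
      exact this
    have hpow : ∃ n : ℕ, x ∈ S ^ (n + 1) := by
      refine Subgroup.closure_induction (p := fun y _ => ∃ n : ℕ, y ∈ S ^ (n + 1))
        (fun y hy => ⟨0, by simpa using hy⟩)
        ⟨0, by simpa using h1S⟩
        (fun y z _ _ ⟨n, hn⟩ ⟨m, hm⟩ => ⟨n + m + 1, by
          have : y * z ∈ S ^ (n + 1) * S ^ (m + 1) := Set.mul_mem_mul hn hm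
          rwa [← pow_add, show n + 1 + (m + 1) = n + m + 1 + 1 by omega] at this⟩)
        (fun y _ ⟨n, hn⟩ => ⟨n, by
          have : y⁻¹ ∈ (S ^ (n + 1))⁻¹ := Set.inv_mem_inv.mpr hn
          rwa [← inv_pow, hSsymm] at this⟩)
        hx
    obtain ⟨n, hn⟩ := hpow
    exact Set.mem_iUnion.mpr ⟨n, subset_closure hn⟩
  -- τ preserves μ
  have hmapτ : μ.map τ = μ := by
    ext s hs
    rw [MeasurableEmbedding.map_apply τmemb μ s]
    have hτT : ∀ n, μ (τ ⁻¹' (s ∩ T n)) = μ (s ∩ T n) := by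
      intro n
      have hcl : IsCompact (closure (s ∩ T n)) := by
        refine (hTcomp n).of_isClosed_subset isClosed_closure ?_
        exact closure_minimal Set.inter_subset_right (hTclosed n)
      rw [hkey _ hcl, hc1, one_smul]
    have hd1 : Directed (· ⊆ ·) (fun n => τ ⁻¹' (s ∩ T n)) :=
      (Monotone.directed_le fun a b hab => Set.preimage_mono
        (Set.inter_subset_inter_right _ (hTmono hab)))
    have hd2 : Directed (· ⊆ ·) (fun n => s ∩ T n) :=
      (Monotone.directed_le fun a b hab =>
        Set.inter_subset_inter_right _ (hTmono hab))
    have hu1 : (⋃ n, τ ⁻¹' (s ∩ T n)) = τ ⁻¹' s := by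
      rw [← Set.preimage_iUnion, ← Set.inter_iUnion, hTcover, Set.inter_univ]
    have hu2 : (⋃ n, s ∩ T n) = s := by
      rw [← Set.inter_iUnion, hTcover, Set.inter_univ]
    calc μ (τ ⁻¹' s) = μ (⋃ n, τ ⁻¹' (s ∩ T n)) := by rw [hu1]
      _ = ⨆ n, μ (τ ⁻¹' (s ∩ T n)) := hd1.measure_iUnion
      _ = ⨆ n, μ (s ∩ T n) := by simp only [hτT]
      _ = μ (⋃ n, s ∩ T n) := (hd2.measure_iUnion).symm
      _ = μ s := by rw [hu2]
  have hmp : MeasurePreserving τ μ μ := ⟨hτc.measurable, hmapτ⟩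
  -- the main pointwise computation
  have key : ∀ x : G,
      (∫ y, f y * g (y⁻¹ * x⁻¹) ∂μ) = ∫ y, g y * f (y⁻¹ * x⁻¹) ∂μ := by
    intro x
    obtain ⟨k₁, hk₁, k₂, hk₂, hτx⟩ := hτK x
    have memb_mul : ∀ a : G, MeasurableEmbedding (fun y : G => a * y) := fun a =>
      (Homeomorph.mulLeft a).measurableEmbedding
    -- Step 1 : A (x⁻¹) = A (τ x)
    have step1 : (∫ y, f y * g (y⁻¹ * x⁻¹) ∂μ) = ∫ y, f y * g (y⁻¹ * τ x) ∂μ := by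
      have sub := (measurePreserving_mul_left μ k₁).integral_comp (memb_mul k₁)
        (fun y => f y * g (y⁻¹ * (k₁ * x⁻¹)))
      calc (∫ y, f y * g (y⁻¹ * x⁻¹) ∂μ)
          = ∫ y, f (k₁ * y) * g ((k₁ * y)⁻¹ * (k₁ * x⁻¹)) ∂μ := by
            refine integral_congr_ae (Filter.Eventually.of_forall fun y => ?_)
            have e1 : f (k₁ * y) = f y := by
              simpa using hfK k₁ hk₁ 1 (Subgroup.one_mem K) y
            have e2 : (k₁ * y)⁻¹ * (k₁ * x⁻¹) = y⁻¹ * x⁻¹ := by group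
            simp only [e1, e2]
        _ = ∫ y, f y * g (y⁻¹ * (k₁ * x⁻¹)) ∂μ := sub
        _ = ∫ y, f y * g (y⁻¹ * τ x) ∂μ := by
            refine integral_congr_ae (Filter.Eventually.of_forall fun y => ?_)
            have e3 : g (y⁻¹ * τ x) = g (y⁻¹ * (k₁ * x⁻¹)) := by
              rw [hτx]
              have := hgK 1 (Subgroup.one_mem K) k₂ hk₂ (y⁻¹ * (k₁ * x⁻¹))
              simpa [mul_assoc] using this
            simp only [e3]
    -- Step 2 : A (τ x) = ∫ f y⁻¹ * g (x⁻¹ y)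
    have step2 : (∫ y, f y * g (y⁻¹ * τ x) ∂μ)
        = ∫ y, f y⁻¹ * g (x⁻¹ * y) ∂μ := by
      have sub := hmp.integral_comp τmemb (fun y => f y * g (y⁻¹ * τ x))
      calc (∫ y, f y * g (y⁻¹ * τ x) ∂μ)
          = ∫ y, f (τ y) * g ((τ y)⁻¹ * τ x) ∂μ := sub.symm
        _ = ∫ y, f y⁻¹ * g (x⁻¹ * y) ∂μ := by
            refine integral_congr_ae (Filter.Eventually.of_forall fun y => ?_)
            have e1 : f (τ y) = f y⁻¹ := by
              obtain ⟨l₁, hl₁, l₂, hl₂, hτy⟩ := hτK y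
              rw [hτy]
              exact hfK l₁ hl₁ l₂ hl₂ y⁻¹
            have e2 : g ((τ y)⁻¹ * τ x) = g (x⁻¹ * y) := by
              rw [← hτinv, ← hτhom]
              obtain ⟨m₁, hm₁, m₂, hm₂, hτz⟩ := hτK (y⁻¹ * x)
              rw [hτz]
              have := hgK m₁ hm₁ m₂ hm₂ (y⁻¹ * x)⁻¹
              rw [this, mul_inv_rev, inv_inv]
            simp only [e1, e2]
    -- Step 3 : substitute y ↦ x * y
    have step3 : (∫ y, f y⁻¹ * g (x⁻¹ * y) ∂μ)
        = ∫ y, g y * f (y⁻¹ * x⁻¹) ∂μ := by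
      have sub := (measurePreserving_mul_left μ x).integral_comp (memb_mul x)
        (fun y => f y⁻¹ * g (x⁻¹ * y))
      calc (∫ y, f y⁻¹ * g (x⁻¹ * y) ∂μ)
          = ∫ y, f (x * y)⁻¹ * g (x⁻¹ * (x * y)) ∂μ := sub.symm
        _ = ∫ y, g y * f (y⁻¹ * x⁻¹) ∂μ := by
            refine integral_congr_ae (Filter.Eventually.of_forall fun y => ?_)
            have e1 : (x * y)⁻¹ = y⁻¹ * x⁻¹ := by group
            have e2 : x⁻¹ * (x * y) = y := by group
            simp only [e1, e2]
            exact mul_comm _ _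
    rw [step1, step2, step3]
  have : (fun x => ∫ y, f y * g (y⁻¹ * x) ∂μ)
      = fun x => ∫ y, g y * f (y⁻¹ * x) ∂μ := by
    funext x
    simpa using key x⁻¹
  rw [this]
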